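/- Let A ⊆ ℝ be a nonempty compact set whose complement's bounded components have lengths given by the fractal string L_A = (ℓ_j)_{j≥1} listed in nonincreasing order (with multiplicity). Define the geometric counting function N(x) = #{j : ℓ_j^{-1} ≤ x} and the basic function β₀(A;t) = 1 + #{j : ℓ_j > 2t}. Then for every ε > 0: vol(A_ε \ A) = 2∫_0^ε β₀(A;t) dt = 2ε + 2∫_0^ε N(1/(2t)) dt. -/

import Mathlib

open Metric MeasureTheory Filter Set Topology
open scoped ENNReal

noncomputable section


lemma vol_Iio_inter {c ε : ℝ} (hε : 0 < ε) :
    volume (Set.Iio c ∩ Set.Ioc 0 ε) = ENNReal.ofReal (min c ε) := by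
  rcases le_total c ε with h | h
  · have : Set.Iio c ∩ Set.Ioc 0 ε = Set.Ioo 0 c := by
      ext x
      simp only [Set.mem_inter_iff, Set.mem_Iio, Set.mem_Ioc, Set.mem_Ioo]
      constructor
      · rintro ⟨h1, h2, h3⟩; exact ⟨h2, h1⟩
      · rintro ⟨h1, h2⟩; exact ⟨h2, h1, le_trans h2.le h⟩
    rw [this, Real.volume_Ioo, min_eq_left h, sub_zero]
  · refine le_antisymm ?_ ?_
    · calc volume (Set.Iio c ∩ Set.Ioc 0 ε) ≤ volume (Set.Ioc 0 ε) :=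
        measure_mono Set.inter_subset_right
      _ = ENNReal.ofReal (min c ε) := by rw [Real.volume_Ioc, min_eq_right h, sub_zero]
    · have h1 : ENNReal.ofReal (min c ε) = volume (Set.Ioo 0 ε) := by
        rw [Real.volume_Ioo, min_eq_right h, sub_zero]
      have h2 : Set.Ioo 0 ε ⊆ Set.Iio c ∩ Set.Ioc 0 ε :=
        fun x hx => ⟨lt_of_lt_of_le hx.2 h, hx.1, hx.2.le⟩
      exact h1.le.trans (measure_mono h2)

lemma vol_Iic_inter {c ε : ℝ} (hε : 0 < ε) :
    volume (Set.Iic c ∩ Set.Ioc 0 ε) = ENNReal.ofReal (min c ε) := by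
  rcases le_total c ε with h | h
  · have : Set.Iic c ∩ Set.Ioc 0 ε = Set.Ioc 0 c := by
      ext x
      simp only [Set.mem_inter_iff, Set.mem_Iic, Set.mem_Ioc]
      constructor
      · rintro ⟨h1, h2, h3⟩; exact ⟨h2, h1⟩
      · rintro ⟨h1, h2⟩; exact ⟨h2, h1, le_trans h2 h⟩
    rw [this, Real.volume_Ioc, min_eq_left h, sub_zero]
  · have : Set.Iic c ∩ Set.Ioc 0 ε = Set.Ioc 0 ε := by
      ext x
      simp only [Set.mem_inter_iff, Set.mem_Iic, Set.mem_Ioc]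
      exact ⟨fun h' => h'.2, fun h' => ⟨le_trans h'.2 h, h'⟩⟩
    rw [this, Real.volume_Ioc, min_eq_right h, sub_zero]

lemma tsum_ind_eq_ncard {S : Set ℕ} (hfin : S.Finite) :
    ∑' j, S.indicator (fun _ => (1 : ℝ≥0∞)) j = (S.ncard : ℝ≥0∞) := by
  rw [tsum_eq_sum (s := hfin.toFinset)
    (fun j hj => Set.indicator_of_notMem (by simpa using hj) _)]
  rw [Finset.sum_congr rfl (fun j hj => Set.indicator_of_mem (by simpa using hj) _)]
  rw [Finset.sum_const, Set.ncard_eq_toFinset_card _ hfin]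
  simp



lemma finite_lt_of_summable {ℓ : ℕ → ℝ} (hsum : Summable ℓ) {c : ℝ} (hc : 0 < c) :
    {j | c ≤ ℓ j}.Finite := by
  have h0 : Tendsto ℓ atTop (nhds 0) := hsum.tendsto_atTop_zero
  have : ∀ᶠ j in atTop, ℓ j < c := h0.eventually (p := fun y => y < c) (Iio_mem_nhds hc)
  obtain ⟨N, hN⟩ := this.exists_forall_of_atTop
  refine Set.Finite.subset (Set.finite_Iio N) fun j hj => ?_
  by_contra h
  exact absurd (hN j (le_of_not_gt (by simpa [Set.mem_Iio] using h))) (not_lt.2 hj)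

lemma summable_min {ℓ : ℕ → ℝ} (hnn : ∀ j, 0 ≤ ℓ j) (hsum : Summable ℓ) {ε : ℝ} (hε : 0 < ε) :
    Summable (fun j => min (ℓ j / 2) ε) := by
  refine Summable.of_nonneg_of_le (fun j => le_min (div_nonneg (hnn j) two_pos.le) hε.le)
    (fun j => min_le_left _ _) (hsum.div_const 2)

/-- The common computation:  ∫⁻ of the ENNReal counting sum. -/
lemma lint_count {ℓ : ℕ → ℝ} (hnn : ∀ j, 0 ≤ ℓ j) (hsum : Summable ℓ) {ε : ℝ} (hε : 0 < ε)
    (I : ℝ → Set ℝ) (hI : ∀ c, MeasurableSet (I c))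
    (hvol : ∀ c, 0 ≤ c → volume (I c ∩ Set.Ioc 0 ε) = ENNReal.ofReal (min c ε)) :
    ∫⁻ t in Set.Ioc 0 ε, ∑' j, (I (ℓ j / 2)).indicator (fun _ => (1:ℝ≥0∞)) t
      = ENNReal.ofReal (∑' j, min (ℓ j / 2) ε) := by
  rw [lintegral_tsum (fun j => ((measurable_const.indicator (hI _)).aemeasurable))]
  have : ∀ j, ∫⁻ t in Set.Ioc 0 ε, (I (ℓ j / 2)).indicator (fun _ => (1:ℝ≥0∞)) t
      = ENNReal.ofReal (min (ℓ j / 2) ε) := by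
    intro j
    rw [lintegral_indicator_const (hI _), Measure.restrict_apply (hI _), one_mul,
      hvol _ (div_nonneg (hnn j) two_pos.le)]
  rw [tsum_congr this, ← ENNReal.ofReal_tsum_of_nonneg
    (fun j => le_min (div_nonneg (hnn j) two_pos.le) hε.le) (summable_min hnn hsum hε)]

lemma integral_one_add_ncard {ℓ : ℕ → ℝ} (hnn : ∀ j, 0 ≤ ℓ j) (hsum : Summable ℓ)
    {ε : ℝ} (hε : 0 < ε) :
    ∫ t in (0:ℝ)..ε, (1 + ({j | 2 * t < ℓ j}.ncard : ℝ))
      = ε + ∑' j, min (ℓ j / 2) ε := by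
  have hfin : ∀ t : ℝ, 0 < t → {j | 2 * t < ℓ j}.Finite := fun t ht =>
    (finite_lt_of_summable hsum (c := 2*t) (by linarith)).subset (by
      intro j hj
      simp only [Set.mem_setOf_eq] at hj ⊢
      linarith)
  set F : ℝ → ℝ≥0∞ := fun t => 1 + ∑' j, (Set.Iio (ℓ j / 2)).indicator (fun _ => (1:ℝ≥0∞)) t
    with hF
  have hFmeas : Measurable F :=
    measurable_const.add (Measurable.ennreal_tsum
      (fun j => measurable_const.indicator measurableSet_Iio))
  have hind : ∀ t : ℝ, (fun j => (Set.Iio (ℓ j / 2)).indicator (fun _ => (1:ℝ≥0∞)) t)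
      = fun j => Set.indicator {j | 2 * t < ℓ j} (fun _ => (1:ℝ≥0∞)) j := by
    intro t; funext j
    simp only [Set.indicator_apply, Set.mem_Iio, Set.mem_setOf_eq]
    exact if_congr (by constructor <;> intro <;> linarith) rfl rfl
  have hFval : ∀ t ∈ Set.Ioc (0:ℝ) ε, F t = 1 + ({j | 2 * t < ℓ j}.ncard : ℝ≥0∞) := by
    intro t ht
    rw [hF]; dsimp only
    rw [tsum_congr (fun j => congrFun (hind t) j), tsum_ind_eq_ncard (hfin t ht.1)]
  rw [intervalIntegral.integral_of_le hε.le]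
  rw [MeasureTheory.setIntegral_congr_fun measurableSet_Ioc
    (fun t ht => show (1 + ({j | 2 * t < ℓ j}.ncard : ℝ)) = (F t).toReal by
      rw [hFval t ht]
      rw [ENNReal.toReal_add (by simp) (by simp)]
      simp)]
  rw [MeasureTheory.integral_toReal (hFmeas.aemeasurable)
    (by
      refine (ae_restrict_iff' measurableSet_Ioc).2 (ae_of_all _ fun t ht => ?_)
      rw [hFval t ht]
      exact ENNReal.add_lt_top.2 ⟨by simp, by simp⟩)]
  have : ∫⁻ t in Set.Ioc 0 ε, F t
      = ENNReal.ofReal ε + ENNReal.ofReal (∑' j, min (ℓ j / 2) ε) := by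
    rw [hF]
    rw [lintegral_add_left measurable_const]
    rw [lintegral_const, Measure.restrict_apply_univ, Real.volume_Ioc, sub_zero, one_mul]
    rw [lint_count hnn hsum hε _ (fun c => measurableSet_Iio) (fun c hc => vol_Iio_inter hε)]
  rw [this, ← ENNReal.ofReal_add hε.le (tsum_nonneg fun j => le_min (div_nonneg (hnn j) two_pos.le) hε.le),
    ENNReal.toReal_ofReal
    (add_nonneg hε.le (tsum_nonneg fun j => le_min (div_nonneg (hnn j) two_pos.le) hε.le))]



lemma integral_ncard_le {ℓ : ℕ → ℝ} (hnn : ∀ j, 0 ≤ ℓ j) (hsum : Summable ℓ)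
    {ε : ℝ} (hε : 0 < ε) :
    ∫ t in (0:ℝ)..ε, (({j | 2 * t ≤ ℓ j}.ncard : ℝ))
      = ∑' j, min (ℓ j / 2) ε := by
  have hfin : ∀ t : ℝ, 0 < t → {j | 2 * t ≤ ℓ j}.Finite := fun t ht =>
    (finite_lt_of_summable hsum (c := 2*t) (by linarith)).subset (by
      intro j hj
      simp only [Set.mem_setOf_eq] at hj ⊢
      linarith)
  set F : ℝ → ℝ≥0∞ := fun t => ∑' j, (Set.Iic (ℓ j / 2)).indicator (fun _ => (1:ℝ≥0∞)) t
    with hF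
  have hFmeas : Measurable F :=
    Measurable.ennreal_tsum (fun j => measurable_const.indicator measurableSet_Iic)
  have hind : ∀ t : ℝ, (fun j => (Set.Iic (ℓ j / 2)).indicator (fun _ => (1:ℝ≥0∞)) t)
      = fun j => Set.indicator {j | 2 * t ≤ ℓ j} (fun _ => (1:ℝ≥0∞)) j := by
    intro t; funext j
    simp only [Set.indicator_apply, Set.mem_Iic, Set.mem_setOf_eq]
    exact if_congr (by constructor <;> intro <;> linarith) rfl rfl
  have hFval : ∀ t ∈ Set.Ioc (0:ℝ) ε, F t = ({j | 2 * t ≤ ℓ j}.ncard : ℝ≥0∞) := by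
    intro t ht
    rw [hF]; dsimp only
    rw [tsum_congr (fun j => congrFun (hind t) j), tsum_ind_eq_ncard (hfin t ht.1)]
  rw [intervalIntegral.integral_of_le hε.le]
  rw [MeasureTheory.setIntegral_congr_fun measurableSet_Ioc
    (fun t ht => show (({j | 2 * t ≤ ℓ j}.ncard : ℝ)) = (F t).toReal by
      rw [hFval t ht]; simp)]
  rw [MeasureTheory.integral_toReal (hFmeas.aemeasurable)
    (by
      refine (ae_restrict_iff' measurableSet_Ioc).2 (ae_of_all _ fun t ht => ?_)
      rw [hFval t ht]
      simp)]
  rw [lint_count hnn hsum hε _ (fun c => measurableSet_Iic) (fun c hc => vol_Iic_inter hε),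
    ENNReal.toReal_ofReal
      (tsum_nonneg fun j => le_min (div_nonneg (hnn j) two_pos.le) hε.le)]


lemma hull_eq {A : Set ℝ} (hA : IsCompact A) (hne : A.Nonempty) :
    convexHull ℝ A = Set.Icc (sInf A) (sSup A) := by
  apply le_antisymm
  · exact convexHull_min
      (fun x hx => ⟨csInf_le hA.bddBelow hx, le_csSup hA.bddAbove hx⟩) (convex_Icc _ _)
  · rw [← segment_eq_Icc (csInf_le_csSup hne hA.bddBelow hA.bddAbove)]
    exact segment_subset_convexHull (hA.sInf_mem hne) (hA.sSup_mem hne)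

lemma endpoints_mem {A : Set ℝ} {a b : ℕ → ℝ} (hA : IsCompact A) (hne : A.Nonempty)
    (hdisj : Pairwise (Function.onFun Disjoint fun j => Set.Ioo (a j) (b j)))
    (hunion : convexHull ℝ A \ A = ⋃ j, Set.Ioo (a j) (b j)) {j : ℕ} (hj : a j < b j) :
    a j ∈ A ∧ b j ∈ A := by
  have hIcc : Set.Icc (a j) (b j) ⊆ Set.Icc (sInf A) (sSup A) := by
    rw [← closure_Ioo hj.ne]
    refine closure_minimal ?_ isClosed_Icc
    intro x hx
    have hx' : x ∈ convexHull ℝ A \ A := hunion ▸ Set.mem_iUnion.2 ⟨j, hx⟩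
    exact (hull_eq hA hne ▸ hx'.1)
  constructor
  · by_contra h
    have hmem : a j ∈ convexHull ℝ A \ A := by
      rw [hull_eq hA hne]
      exact ⟨hIcc ⟨le_refl _, hj.le⟩, h⟩
    rw [hunion] at hmem
    obtain ⟨i, hi⟩ := Set.mem_iUnion.1 hmem
    have hij : i ≠ j := fun h' => by rw [h'] at hi; exact lt_irrefl _ hi.1
    have hmin : a j < min (b i) (b j) := lt_min hi.2 hj
    set y := (a j + min (b i) (b j)) / 2 with hy
    have hy1 : a j < y := by rw [hy]; linarith
    have hy2 : y < min (b i) (b j) := by rw [hy]; linarith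
    have m1 : y ∈ Set.Ioo (a i) (b i) :=
      ⟨lt_trans hi.1 hy1, lt_of_lt_of_le hy2 (min_le_left _ _)⟩
    have m2 : y ∈ Set.Ioo (a j) (b j) := ⟨hy1, lt_of_lt_of_le hy2 (min_le_right _ _)⟩
    exact Set.disjoint_left.1 (hdisj hij) m1 m2
  · by_contra h
    have hmem : b j ∈ convexHull ℝ A \ A := by
      rw [hull_eq hA hne]
      exact ⟨hIcc ⟨hj.le, le_refl _⟩, h⟩
    rw [hunion] at hmem
    obtain ⟨i, hi⟩ := Set.mem_iUnion.1 hmem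
    have hij : i ≠ j := fun h' => by rw [h'] at hi; exact lt_irrefl _ hi.2
    have hmax : max (a i) (a j) < b j := max_lt hi.1 hj
    set y := (max (a i) (a j) + b j) / 2 with hy
    have hy1 : max (a i) (a j) < y := by rw [hy]; linarith
    have hy2 : y < b j := by rw [hy]; linarith
    have m1 : y ∈ Set.Ioo (a i) (b i) :=
      ⟨lt_of_le_of_lt (le_max_left _ _) hy1, lt_trans hy2 hi.2⟩
    have m2 : y ∈ Set.Ioo (a j) (b j) := ⟨lt_of_le_of_lt (le_max_right _ _) hy1, hy2⟩
    exact Set.disjoint_left.1 (hdisj hij) m1 m2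

lemma summable_len {A : Set ℝ} {ℓ a b : ℕ → ℝ} (hA : IsCompact A) (hne : A.Nonempty)
    (hlen : ∀ j, ℓ j = b j - a j) (hnn : ∀ j, 0 ≤ ℓ j)
    (hdisj : Pairwise (Function.onFun Disjoint fun j => Set.Ioo (a j) (b j)))
    (hunion : convexHull ℝ A \ A = ⋃ j, Set.Ioo (a j) (b j)) :
    Summable ℓ := by
  have hmeas : volume (⋃ j, Set.Ioo (a j) (b j)) = ∑' j, ENNReal.ofReal (ℓ j) := by
    rw [measure_iUnion hdisj (fun j => measurableSet_Ioo)]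
    exact tsum_congr fun j => by rw [Real.volume_Ioo, hlen j]
  have hsub : (⋃ j, Set.Ioo (a j) (b j)) ⊆ Set.Icc (sInf A) (sSup A) := by
    rw [← hunion, hull_eq hA hne]
    exact (Set.diff_subset).trans (le_refl _)
  have hfin : ∑' j, ENNReal.ofReal (ℓ j) ≠ ⊤ := by
    rw [← hmeas]
    exact ((measure_mono hsub).trans_lt
      (by rw [Real.volume_Icc]; exact ENNReal.ofReal_lt_top)).ne
  exact (ENNReal.summable_toReal hfin).congr fun j => ENNReal.toReal_ofReal (hnn j)

lemma mem_cth_iff {A : Set ℝ} (hne : A.Nonempty) {ε x : ℝ} (hε : 0 ≤ ε) :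
    x ∈ Metric.cthickening ε A ↔ Metric.infDist x A ≤ ε := by
  rw [Metric.mem_cthickening_iff]
  exact ENNReal.le_ofReal_iff_toReal_le (Metric.infEdist_ne_top hne) hε



lemma gap_inter_A {A : Set ℝ} {a b : ℕ → ℝ}
    (hunion : convexHull ℝ A \ A = ⋃ j, Set.Ioo (a j) (b j)) (j : ℕ) :
    ∀ x ∈ Set.Ioo (a j) (b j), x ∉ A := by
  intro x hx hxA
  have : x ∈ convexHull ℝ A \ A := hunion ▸ Set.mem_iUnion.2 ⟨j, hx⟩
  exact this.2 hxA

lemma infDist_gap {A : Set ℝ} {a b : ℕ → ℝ} (hA : IsCompact A) (hne : A.Nonempty)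
    (hunion : convexHull ℝ A \ A = ⋃ j, Set.Ioo (a j) (b j)) {j : ℕ} {x : ℝ}
    (haj : a j ∈ A) (hbj : b j ∈ A) (hx : x ∈ Set.Ioo (a j) (b j)) :
    Metric.infDist x A = min (x - a j) (b j - x) := by
  apply le_antisymm
  · apply le_min
    · calc Metric.infDist x A ≤ dist x (a j) := Metric.infDist_le_dist_of_mem haj
        _ = x - a j := by rw [Real.dist_eq, abs_of_pos (by linarith [hx.1])]
    · calc Metric.infDist x A ≤ dist x (b j) := Metric.infDist_le_dist_of_mem hbj
        _ = b j - x := by rw [Real.dist_eq, abs_of_neg (by linarith [hx.2]), neg_sub]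
  · obtain ⟨y, hyA, hyd⟩ := hA.exists_infDist_eq_dist hne x
    rw [hyd, Real.dist_eq]
    have hyout : y ∉ Set.Ioo (a j) (b j) := fun h => gap_inter_A hunion j y h hyA
    rcases le_or_gt y (a j) with h | h
    · calc min (x - a j) (b j - x) ≤ x - a j := min_le_left _ _
        _ ≤ x - y := by linarith
        _ ≤ |x - y| := le_abs_self _
    · have h2 : b j ≤ y := le_of_not_gt fun hlt => hyout ⟨h, hlt⟩
      calc min (x - a j) (b j - x) ≤ b j - x := min_le_right _ _
        _ ≤ y - x := by linarith [h2]
        _ ≤ |x - y| := by rw [abs_sub_comm]; exact le_abs_self _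

lemma vol_gap {A : Set ℝ} {ℓ a b : ℕ → ℝ} (hA : IsCompact A) (hne : A.Nonempty)
    (hlen : ∀ j, ℓ j = b j - a j) (hnn : ∀ j, 0 ≤ ℓ j)
    (hdisj : Pairwise (Function.onFun Disjoint fun j => Set.Ioo (a j) (b j)))
    (hunion : convexHull ℝ A \ A = ⋃ j, Set.Ioo (a j) (b j))
    {ε : ℝ} (hε : 0 < ε) (j : ℕ) :
    volume (Set.Ioo (a j) (b j) ∩ Metric.cthickening ε A)
      = ENNReal.ofReal (min (ℓ j) (2 * ε)) := by
  have hlj := hlen j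
  rcases lt_or_ge (a j) (b j) with hj | hj
  swap
  · have hempty : Set.Ioo (a j) (b j) = ∅ := Set.Ioo_eq_empty (not_lt.2 hj)
    have hl0 : ℓ j = 0 := le_antisymm (by rw [hlj]; linarith) (hnn j)
    rw [hempty, Set.empty_inter, measure_empty, hl0,
      min_eq_left (by linarith : (0:ℝ) ≤ 2 * ε), ENNReal.ofReal_zero]
  obtain ⟨haj, hbj⟩ := endpoints_mem hA hne hdisj hunion hj
  have hiff : ∀ x ∈ Set.Ioo (a j) (b j),
      (x ∈ Metric.cthickening ε A ↔ min (x - a j) (b j - x) ≤ ε) := by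
    intro x hx
    rw [mem_cth_iff hne hε.le, infDist_gap hA hne hunion haj hbj hx]
  rcases le_or_gt (ℓ j) (2 * ε) with hsmall | hbig
  · have heq : Set.Ioo (a j) (b j) ∩ Metric.cthickening ε A = Set.Ioo (a j) (b j) := by
      refine Set.inter_eq_left.2 fun x hx => (hiff x hx).2 ?_
      rcases le_total (x - a j) (b j - x) with h | h
      · rw [min_eq_left h]; have := hx.1; have := hx.2; linarith
      · rw [min_eq_right h]; have := hx.1; have := hx.2; linarith
    rw [heq, Real.volume_Ioo, ← hlj, min_eq_left hsmall]
  · have heq : Set.Ioo (a j) (b j) ∩ Metric.cthickening ε A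
        = Set.Ioc (a j) (a j + ε) ∪ Set.Ico (b j - ε) (b j) := by
      ext x
      simp only [Set.mem_inter_iff, Set.mem_Ioo, Set.mem_union, Set.mem_Ioc, Set.mem_Ico]
      constructor
      · rintro ⟨hx, hc⟩
        have hm := (hiff x ⟨hx.1, hx.2⟩).1 hc
        rcases le_total (x - a j) (b j - x) with h | h
        · rw [min_eq_left h] at hm; left; exact ⟨hx.1, by linarith⟩
        · rw [min_eq_right h] at hm; right; exact ⟨by linarith, hx.2⟩
      · rintro (⟨h1, h2⟩ | ⟨h1, h2⟩)
        · have hx : x ∈ Set.Ioo (a j) (b j) := ⟨h1, by linarith⟩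
          exact ⟨⟨hx.1, hx.2⟩, (hiff x hx).2 (le_trans (min_le_left _ _) (by linarith))⟩
        · have hx : x ∈ Set.Ioo (a j) (b j) := ⟨by linarith, h2⟩
          exact ⟨⟨hx.1, hx.2⟩, (hiff x hx).2 (le_trans (min_le_right _ _) (by linarith))⟩
    have hd : Disjoint (Set.Ioc (a j) (a j + ε)) (Set.Ico (b j - ε) (b j)) := by
      rw [Set.disjoint_left]
      intro x h1 h2
      have := h1.2; have := h2.1; linarith
    rw [heq, measure_union hd measurableSet_Ico, Real.volume_Ioc, Real.volume_Ico,
      add_sub_cancel_left, sub_sub_cancel, ← ENNReal.ofReal_add hε.le hε.le,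
      min_eq_right hbig.le]
    congr 1; ring



lemma vol_total {A : Set ℝ} {ℓ a b : ℕ → ℝ} (hA : IsCompact A) (hne : A.Nonempty)
    (hlen : ∀ j, ℓ j = b j - a j) (hnn : ∀ j, 0 ≤ ℓ j)
    (hdisj : Pairwise (Function.onFun Disjoint fun j => Set.Ioo (a j) (b j)))
    (hunion : convexHull ℝ A \ A = ⋃ j, Set.Ioo (a j) (b j))
    {ε : ℝ} (hε : 0 < ε) :
    volume (Metric.cthickening ε A \ A)
      = ENNReal.ofReal ε + ENNReal.ofReal ε + ∑' j, ENNReal.ofReal (min (ℓ j) (2 * ε)) := by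
  set m := sInf A with hm'
  set M := sSup A with hM'
  have hm : m ∈ A := hA.sInf_mem hne
  have hM : M ∈ A := hA.sSup_mem hne
  have hmM : m ≤ M := csInf_le_csSup hne hA.bddBelow hA.bddAbove
  have hAsub : A ⊆ Set.Icc m M := fun x hx =>
    ⟨csInf_le hA.bddBelow hx, le_csSup hA.bddAbove hx⟩
  have hgapIcc : ∀ j, Set.Ioo (a j) (b j) ⊆ Set.Icc m M := by
    intro j x hx
    have : x ∈ convexHull ℝ A \ A := hunion ▸ Set.mem_iUnion.2 ⟨j, hx⟩
    exact hull_eq hA hne ▸ this.1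
  have hdecomp : Metric.cthickening ε A \ A
      = (Set.Ico (m - ε) m ∪ Set.Ioc M (M + ε))
        ∪ ⋃ j, (Set.Ioo (a j) (b j) ∩ Metric.cthickening ε A) := by
    apply Set.Subset.antisymm
    · rintro x ⟨hxc, hxA⟩
      obtain ⟨y, hyA, hyd⟩ := hA.exists_infDist_eq_dist hne x
      have hdist : |x - y| ≤ ε := by
        rw [← Real.dist_eq, ← hyd]; exact (mem_cth_iff hne hε.le).1 hxc
      obtain ⟨hd1, hd2⟩ := abs_le.1 hdist
      have hy := hAsub hyA
      rcases lt_or_ge x m with h | h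
      · exact Or.inl (Or.inl ⟨by linarith [hy.1], h⟩)
      rcases lt_or_ge M x with h' | h'
      · exact Or.inl (Or.inr ⟨h', by linarith [hy.2]⟩)
      · have hx' : x ∈ convexHull ℝ A \ A := by
          rw [hull_eq hA hne]; exact ⟨⟨h, h'⟩, hxA⟩
        rw [hunion] at hx'
        obtain ⟨i, hi⟩ := Set.mem_iUnion.1 hx'
        exact Or.inr (Set.mem_iUnion.2 ⟨i, hi, hxc⟩)
    · rintro x ((⟨h1, h2⟩ | ⟨h1, h2⟩) | h)
      · refine ⟨Metric.closedBall_subset_cthickening hm ε ?_, fun hxA => absurd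
          (csInf_le hA.bddBelow hxA) (not_le.2 h2)⟩
        rw [Metric.mem_closedBall, Real.dist_eq, abs_of_nonpos (by linarith)]
        linarith
      · refine ⟨Metric.closedBall_subset_cthickening hM ε ?_, fun hxA => absurd
          (le_csSup hA.bddAbove hxA) (not_le.2 h1)⟩
        rw [Metric.mem_closedBall, Real.dist_eq, abs_of_nonneg (by linarith)]
        linarith
      · obtain ⟨i, hi, hic⟩ := Set.mem_iUnion.1 h
        exact ⟨hic, gap_inter_A hunion i x hi⟩
  have hmeas3 : ∀ j, MeasurableSet (Set.Ioo (a j) (b j) ∩ Metric.cthickening ε A) :=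
    fun j => measurableSet_Ioo.inter (Metric.isClosed_cthickening.measurableSet)
  have hd12 : Disjoint (Set.Ico (m - ε) m) (Set.Ioc M (M + ε)) := by
    rw [Set.disjoint_left]; intro x h1 h2
    have := h1.2; have := h2.1; linarith
  have hd3 : Disjoint (Set.Ico (m - ε) m ∪ Set.Ioc M (M + ε))
      (⋃ j, (Set.Ioo (a j) (b j) ∩ Metric.cthickening ε A)) := by
    rw [Set.disjoint_left]
    rintro x (⟨h1, h2⟩ | ⟨h1, h2⟩) hx
    · obtain ⟨i, hi, -⟩ := Set.mem_iUnion.1 hx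
      exact absurd (hgapIcc i hi).1 (not_le.2 h2)
    · obtain ⟨i, hi, -⟩ := Set.mem_iUnion.1 hx
      exact absurd (hgapIcc i hi).2 (not_le.2 h1)
  rw [hdecomp, measure_union hd3 (MeasurableSet.iUnion hmeas3),
    measure_union hd12 measurableSet_Ioc,
    measure_iUnion (fun i j hij => ((hdisj hij).mono Set.inter_subset_left
      Set.inter_subset_left)) hmeas3,
    Real.volume_Ico, Real.volume_Ioc, sub_sub_cancel, add_sub_cancel_left]
  congr 1
  exact tsum_congr fun j => vol_gap hA hne hlen hnn hdisj hunion hε j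

/-- general Steiner formula in dimension 1: let `A ⊆ ℝ` be nonempty
compact whose complement inside its convex hull is the disjoint union of the open
intervals `(a_j, b_j)` with lengths `ℓ_j = b_j − a_j` listed in nonincreasing order.
With the geometric counting function `N(x) = #{j : ℓ_j ≥ 1/x}` and the basic function
`β₀(t) = 1 + #{j : ℓ_j > 2t}`, the parallel volume satisfies, for every `ε > 0`,
`vol(A_ε \ A) = 2 ∫₀^ε β₀(t) dt = 2ε + 2 ∫₀^ε N(1/(2t)) dt`. -/
theorem steiner_formula_dim_one (A : Set ℝ) (hA : IsCompact A) (hne : A.Nonempty)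
    (ℓ a b : ℕ → ℝ)
    (hlen : ∀ j, ℓ j = b j - a j)
    (hnn : ∀ j, 0 ≤ ℓ j)
    (hanti : Antitone ℓ)
    (hdisj : Pairwise (Function.onFun Disjoint fun j => Set.Ioo (a j) (b j)))
    (hunion : convexHull ℝ A \ A = ⋃ j, Set.Ioo (a j) (b j)) :
    ∀ ε > (0:ℝ),
      (volume (Metric.cthickening ε A \ A)).toReal =
        2 * ∫ t in (0:ℝ)..ε, (1 + (Set.ncard {j | 2 * t < ℓ j} : ℝ)) ∧
      (volume (Metric.cthickening ε A \ A)).toReal =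
        2 * ε + 2 * ∫ t in (0:ℝ)..ε, (Set.ncard {j | 2 * t ≤ ℓ j} : ℝ) := by
  intro ε hε
  have hsum : Summable ℓ := summable_len hA hne hlen hnn hdisj hunion
  have hminnn : ∀ j, 0 ≤ min (ℓ j) (2 * ε) := fun j => le_min (hnn j) (by linarith)
  have hS2 : ∑' j, min (ℓ j) (2 * ε) = 2 * ∑' j, min (ℓ j / 2) ε := by
    rw [← tsum_mul_left]
    refine tsum_congr fun j => ?_
    rcases le_total (ℓ j / 2) ε with h | h
    · rw [min_eq_left h, min_eq_left (by linarith)]; ring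
    · rw [min_eq_right h, min_eq_right (by linarith)]
  have htoReal : (volume (Metric.cthickening ε A \ A)).toReal
      = ε + ε + ∑' j, min (ℓ j) (2 * ε) := by
    rw [vol_total hA hne hlen hnn hdisj hunion hε]
    have hsummin : Summable (fun j => min (ℓ j) (2 * ε)) :=
      Summable.of_nonneg_of_le hminnn (fun j => min_le_left _ _) hsum
    rw [← ENNReal.ofReal_tsum_of_nonneg hminnn hsummin,
      ← ENNReal.ofReal_add hε.le hε.le,
      ← ENNReal.ofReal_add (by linarith) (tsum_nonneg hminnn),
      ENNReal.toReal_ofReal (by linarith [(tsum_nonneg hminnn : (0:ℝ) ≤ ∑' j, min (ℓ j) (2 * ε))])]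
  constructor
  · rw [htoReal, integral_one_add_ncard hnn hsum hε, hS2]; ring
  · rw [htoReal, integral_ncard_le hnn hsum hε, hS2]; ring
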